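/- arXiv:1009.0771 — 3 statements merged into one kernel-verified Lean document; each statement's English description precedes it below -/
import Mathlib

section
/- Let n, m be positive integers, let ε be a real number with 0 < ε < 1 and suppose n ≥ m/ε. Let α : Fin (2^m) → ℝ satisfy α_i ≥ 0 for all i and ∑_i α_i² = 1, and let C_n = √(∑_{j=1}^{2^n} 1/j). Define γ : Fin (2^n) × Fin (2^m) → ℝ by γ_{(j,i)} = α_i / (C_n · √j) (with j ranging over 1,…,2^n). Let g : Fin (2^{n+m}) → ℝ be the non-increasing rearrangement of γ, i.e. g = γ ∘ σ for some bijection σ : Fin (2^{n+m}) → Fin (2^n) × Fin (2^m) such that g is antitone. Then (1/C_n) · ∑_{r=1}^{2^n} g_r / √r ≥ 1 − ε. -/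
open Finset Real

noncomputable def Hsum (K : ℕ) : ℝ := ∑ k ∈ Finset.range K, 1/((k:ℝ)+1)

lemma Hsum_succ (K : ℕ) : Hsum (K+1) = Hsum K + 1/((K:ℝ)+1) := by
  simp [Hsum, Finset.sum_range_succ]

lemma Hsum_one : Hsum 1 = 1 := by simp [Hsum]

lemma Hsum_nonneg (K : ℕ) : 0 ≤ Hsum K := by
  apply Finset.sum_nonneg; intro k _; positivity

-- exp upper bound, quartic
lemma exp_upper {y : ℝ} (h0 : 0 ≤ y) (h1 : y ≤ 1) :
    Real.exp y ≤ 1 + y + y^2/2 + y^3/6 + (5/96)*y^4 := by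
  have := Real.exp_bound' h0 h1 (n := 4) (by norm_num)
  calc Real.exp y ≤ (∑ m ∈ Finset.range 4, y ^ m / m.factorial) +
      y ^ 4 * (4 + 1) / (Nat.factorial 4 * 4) := this
    _ = 1 + y + y^2/2 + y^3/6 + (5/96)*y^4 := by
        norm_num [Finset.sum_range_succ, Nat.factorial]
        try ring

lemma exp_lower {y : ℝ} (h0 : 0 ≤ y) :
    1 + y + y^2/2 + y^3/6 ≤ Real.exp y := by
  have := Real.sum_le_exp_of_nonneg h0 4
  calc 1 + y + y^2/2 + y^3/6 = ∑ i ∈ Finset.range 4, y ^ i / i.factorial := by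
        norm_num [Finset.sum_range_succ, Nat.factorial]
        try ring
    _ ≤ Real.exp y := this

-- log t ≤ (t - 1/t)/2  for t ≥ 1
lemma log_upper {t : ℝ} (ht : 1 ≤ t) : Real.log t ≤ (t - t⁻¹)/2 := by
  rcases eq_or_lt_of_le ht with h | h
  · simp [← h]
  · have hlt : Real.log t < Real.sinh (Real.log t) :=
      Real.self_lt_sinh_iff.mpr (Real.log_pos h)
    rw [Real.sinh_log (by linarith)] at hlt
    exact hlt.le

-- 2x ≤ log((1+x)/(1-x)) for 0 ≤ x ≤ 1/2
lemma log_lower {x : ℝ} (h0 : 0 ≤ x) (h1 : x ≤ 1/2) :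
    2*x ≤ Real.log ((1+x)/(1-x)) := by
  have hx1 : (0:ℝ) < 1 - x := by linarith
  have key : Real.exp (2*x) * (1-x) ≤ 1+x := by
    have he := exp_upper (y := 2*x) (by linarith) (by linarith)
    have : Real.exp (2*x) * (1-x) ≤ (1 + 2*x + (2*x)^2/2 + (2*x)^3/6 + (5/96)*(2*x)^4) * (1-x) := by
      apply mul_le_mul_of_nonneg_right he (le_of_lt hx1)
    calc Real.exp (2*x) * (1-x) ≤ (1 + 2*x + (2*x)^2/2 + (2*x)^3/6 + (5/96)*(2*x)^4) * (1-x) := this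
      _ = 1 + x - (2/3)*x^3 - (1/2)*x^4 - (5/6)*x^5 := by ring
      _ ≤ 1 + x := by nlinarith [pow_nonneg h0 3, pow_nonneg h0 4, pow_nonneg h0 5]
  have h2 : Real.exp (2*x) ≤ (1+x)/(1-x) := (le_div_iff₀ hx1).mpr key
  have h3 := Real.log_le_log (Real.exp_pos _) h2
  rwa [Real.log_exp] at h3

-- 1/k ≤ log(2k+1) - log(2k-1) for k ≥ 1
lemma one_div_le_log_ratio {k : ℕ} (hk : 1 ≤ k) :
    1/((k:ℝ)) ≤ Real.log (2*(k:ℝ)+1) - Real.log (2*(k:ℝ)-1) := by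
  have hk1 : (1:ℝ) ≤ (k:ℝ) := by exact_mod_cast hk
  set x : ℝ := 1/(2*(k:ℝ)) with hx
  have hx0 : 0 ≤ x := by positivity
  have hx2 : x ≤ 1/2 := by
    rw [hx]; rw [div_le_div_iff₀ (by linarith) (by norm_num)]; linarith
  have h := log_lower hx0 hx2
  have hxe : (1+x)/(1-x) = (2*(k:ℝ)+1)/(2*(k:ℝ)-1) := by
    rw [hx]; field_simp
    try ring
  rw [hxe] at h
  have h2 : 2*x = 1/(k:ℝ) := by rw [hx]; field_simp
  rw [h2] at h
  rwa [Real.log_div (by linarith) (by linarith)] at h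

-- Hsum lower bound: log K + 1/2 + 1/(2K) ≤ Hsum K
lemma Hsum_ge (K : ℕ) (hK : 1 ≤ K) :
    Real.log K + 1/2 + 1/(2*(K:ℝ)) ≤ Hsum K := by
  induction K with
  | zero => omega
  | succ K ih =>
    rcases Nat.eq_or_lt_of_le hK with h | h
    · simp [← h, Hsum_one]; norm_num
    · have hK1 : 1 ≤ K := by omega
      have hKr : (1:ℝ) ≤ (K:ℝ) := by exact_mod_cast hK1
      have ih' := ih hK1
      rw [Hsum_succ]
      have key : Real.log ((K:ℝ)+1) - Real.log K ≤
          1/((K:ℝ)+1) + 1/(2*(K:ℝ)) - 1/(2*((K:ℝ)+1)) := by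
        have hlog : Real.log ((K:ℝ)+1) - Real.log K = Real.log (((K:ℝ)+1)/K) := by
          rw [Real.log_div (by linarith) (by linarith)]
        rw [hlog]
        have ht : (1:ℝ) ≤ ((K:ℝ)+1)/K := by
          rw [le_div_iff₀ (by linarith)]; linarith
        have := log_upper ht
        have hinv : (((K:ℝ)+1)/K)⁻¹ = K/((K:ℝ)+1) := by
          rw [inv_div]
        rw [hinv] at this
        calc Real.log (((K:ℝ)+1)/K) ≤ (((K:ℝ)+1)/K - K/((K:ℝ)+1))/2 := this
          _ = 1/((K:ℝ)+1) + 1/(2*(K:ℝ)) - 1/(2*((K:ℝ)+1)) := by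
              field_simp; ring
      push_cast
      push_cast at ih'
      linarith

-- Hsum difference upper bound
lemma Hsum_diff (Q N : ℕ) (hQ : 1 ≤ Q) (hQN : Q ≤ N) :
    Hsum N - Hsum Q ≤ Real.log (2*(N:ℝ)+1) - Real.log (2*(Q:ℝ)+1) := by
  induction N, hQN using Nat.le_induction with
  | base => simp
  | succ N hN ih =>
    have hN1 : 1 ≤ N := le_trans hQ hN
    have hNr : (1:ℝ) ≤ (N:ℝ) := by exact_mod_cast hN1
    have step := one_div_le_log_ratio (k := N+1) (by omega)
    rw [Hsum_succ]
    push_cast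
    push_cast at step ih
    have e1 : (2*((N:ℝ)+1)-1) = 2*(N:ℝ)+1 := by ring
    rw [e1] at step
    linarith

-- pointwise max-affine inequality
lemma pointwise (N Q K : ℕ) (w : ℝ) (hw : 0 ≤ w) (hN : 1 ≤ N) (hQ : 1 ≤ Q)
    (hK1 : (K:ℝ) ≤ (N:ℝ)*w) (hK2 : (N:ℝ)*w < (K:ℝ)+1) :
    w*Hsum Q - (Q:ℝ)/(N:ℝ) ≤ w*Hsum K - (K:ℝ)/(N:ℝ) := by
  have hNr : (0:ℝ) < (N:ℝ) := by exact_mod_cast Nat.lt_of_lt_of_le Nat.zero_lt_one hN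
  rcases le_or_gt Q K with hQK | hKQ
  · have hKpos : 0 < K := lt_of_lt_of_le hQ hQK
    have hKr : (0:ℝ) < (K:ℝ) := by exact_mod_cast hKpos
    have hdiff : Hsum K - Hsum Q = ∑ k ∈ Finset.Ico Q K, 1/((k:ℝ)+1) := by
      rw [Hsum, Hsum, Finset.sum_Ico_eq_sub _ hQK]
    have hbound : ((K:ℝ)-(Q:ℝ))/(K:ℝ) ≤ ∑ k ∈ Finset.Ico Q K, 1/((k:ℝ)+1) := by
      have h1 : ∀ k ∈ Finset.Ico Q K, 1/(K:ℝ) ≤ 1/((k:ℝ)+1) := by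
        intro k hk
        rw [Finset.mem_Ico] at hk
        have : (k:ℝ)+1 ≤ K := by exact_mod_cast hk.2
        exact one_div_le_one_div_of_le (by positivity) this
      calc ((K:ℝ)-(Q:ℝ))/(K:ℝ) = (Finset.Ico Q K).card • (1/(K:ℝ)) := by
            rw [Nat.card_Ico, nsmul_eq_mul, Nat.cast_sub hQK]; ring
        _ ≤ ∑ k ∈ Finset.Ico Q K, 1/((k:ℝ)+1) := Finset.card_nsmul_le_sum _ _ _ h1
    have hw' : (K:ℝ)/(N:ℝ) ≤ w := (div_le_iff₀ hNr).mpr (by linarith [hK1])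
    have hstep : ((K:ℝ)-(Q:ℝ))/(N:ℝ) ≤ w * (Hsum K - Hsum Q) := by
      have h2 : ((K:ℝ)/(N:ℝ)) * (((K:ℝ)-(Q:ℝ))/(K:ℝ)) ≤ w * (Hsum K - Hsum Q) := by
        have hc : (0:ℝ) ≤ ((K:ℝ)-(Q:ℝ))/(K:ℝ) := by
          apply div_nonneg _ (le_of_lt hKr)
          have : (Q:ℝ) ≤ (K:ℝ) := by exact_mod_cast hQK
          linarith
        apply mul_le_mul hw' (by rw [hdiff]; exact hbound) hc hw
      calc ((K:ℝ)-(Q:ℝ))/(N:ℝ) = ((K:ℝ)/(N:ℝ)) * (((K:ℝ)-(Q:ℝ))/(K:ℝ)) := by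
            field_simp
        _ ≤ w * (Hsum K - Hsum Q) := h2
    have e : ((K:ℝ)-(Q:ℝ))/(N:ℝ) = (K:ℝ)/(N:ℝ) - (Q:ℝ)/(N:ℝ) := sub_div _ _ _
    rw [e] at hstep
    linarith [hstep]
  · -- K < Q
    have hdiff : Hsum Q - Hsum K = ∑ k ∈ Finset.Ico K Q, 1/((k:ℝ)+1) := by
      rw [Hsum, Hsum, Finset.sum_Ico_eq_sub _ (le_of_lt hKQ)]
    have hbound : ∑ k ∈ Finset.Ico K Q, 1/((k:ℝ)+1) ≤ ((Q:ℝ)-(K:ℝ))/((K:ℝ)+1) := by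
      have h1 : ∀ k ∈ Finset.Ico K Q, 1/((k:ℝ)+1) ≤ 1/((K:ℝ)+1) := by
        intro k hk
        rw [Finset.mem_Ico] at hk
        have : (K:ℝ)+1 ≤ (k:ℝ)+1 := by
          have : (K:ℝ) ≤ (k:ℝ) := by exact_mod_cast hk.1
          linarith
        exact one_div_le_one_div_of_le (by positivity) this
      calc ∑ k ∈ Finset.Ico K Q, 1/((k:ℝ)+1) ≤ (Finset.Ico K Q).card • (1/((K:ℝ)+1)) :=
            Finset.sum_le_card_nsmul _ _ _ h1
        _ = ((Q:ℝ)-(K:ℝ))/((K:ℝ)+1) := by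
            rw [Nat.card_Ico, nsmul_eq_mul, Nat.cast_sub (le_of_lt hKQ)]; ring
    have hw2 : w ≤ ((K:ℝ)+1)/(N:ℝ) := (le_div_iff₀ hNr).mpr (by nlinarith [hK2])
    have hstep : w * (Hsum Q - Hsum K) ≤ ((Q:ℝ)-(K:ℝ))/(N:ℝ) := by
      have hQKr : (0:ℝ) ≤ (Q:ℝ)-(K:ℝ) := by
        have : (K:ℝ) ≤ (Q:ℝ) := by exact_mod_cast le_of_lt hKQ
        linarith
      have h2 : w * (Hsum Q - Hsum K) ≤ (((K:ℝ)+1)/(N:ℝ)) * (((Q:ℝ)-(K:ℝ))/((K:ℝ)+1)) := by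
        apply mul_le_mul hw2 (by rw [hdiff]; exact hbound) (by rw [hdiff]; positivity) (by positivity)
      calc w * (Hsum Q - Hsum K) ≤ (((K:ℝ)+1)/(N:ℝ)) * (((Q:ℝ)-(K:ℝ))/((K:ℝ)+1)) := h2
        _ = ((Q:ℝ)-(K:ℝ))/(N:ℝ) := by
            field_simp
    have e : ((Q:ℝ)-(K:ℝ))/(N:ℝ) = (Q:ℝ)/(N:ℝ) - (K:ℝ)/(N:ℝ) := sub_div _ _ _
    rw [e] at hstep
    linarith [hstep]

lemma two_mul_le_two_pow {t : ℕ} (ht : 1 ≤ t) : 2*t ≤ 2^t := by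
  induction t with
  | zero => omega
  | succ t ih =>
    rcases Nat.eq_or_lt_of_le ht with h | h
    · simp [← h]
    · have ht1 : 1 ≤ t := by omega
      have h2 : 2 ≤ 2^t := by
        calc 2 = 2^1 := rfl
        _ ≤ 2^t := Nat.pow_le_pow_right (by norm_num) ht1
      have := ih ht1
      rw [pow_succ]
      omega

lemma natarith (m t : ℕ) (hm : 1 ≤ m) (ht : 1 ≤ t) :
    (m+t)*(4*2^t+1)*(2*2^m) ≤
      4*(2^t*2^m)*(m+t) + m*(2^t*2^m+1)*(4*2^t+1) + (m+t)*(4*2^t+1) := by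
  have hD2 : 2 ≤ 2^m := by
    calc 2 = 2^1 := rfl
    _ ≤ 2^m := Nat.pow_le_pow_right (by norm_num) hm
  rcases Nat.eq_or_lt_of_le ht with h1 | h1
  · -- t = 1
    have h1' : t = 1 := h1.symm
    subst h1'
    norm_num
    rcases Nat.eq_or_lt_of_le hm with hm1 | hm1
    · have hm1' : m = 1 := hm1.symm
      subst hm1'
      norm_num
    · have hm2 : 2 ≤ m := hm1
      nlinarith [hD2, hm2]
  · -- t ≥ 2
    set Q := 2^t with hQdef
    set D := 2^m with hDdef
    have ht2 : 2 ≤ t := h1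
    have hQ4 : 4 ≤ Q := by
      calc 4 = 2^2 := rfl
      _ ≤ 2^t := Nat.pow_le_pow_right (by norm_num) ht2
    have hQ2t : 2*t ≤ Q := two_mul_le_two_pow ht
    have h5 : 5*(m+t) ≤ 4*(m*Q) := by
      rcases Nat.eq_or_lt_of_le hm with hm1 | hm1
      · -- m = 1
        rw [← hm1]; omega
      · have hm2 : 2 ≤ m := hm1
        have h3 : 2*t ≤ m*t := Nat.mul_le_mul_right t hm2
        have h4 : 2*m ≤ m*t := by
          calc 2*m = m*2 := by ring
          _ ≤ m*t := Nat.mul_le_mul_left m ht2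
        have h6 : 2*(m*t) ≤ m*Q := by
          calc 2*(m*t) = m*(2*t) := by ring
          _ ≤ m*Q := Nat.mul_le_mul_left m hQ2t
        linarith
    -- main
    have h6 : 5*((m+t)*(Q*D)) ≤ 4*((m*Q)*(Q*D)) := by
      calc 5*((m+t)*(Q*D)) = (5*(m+t))*(Q*D) := by ring
      _ ≤ (4*(m*Q))*(Q*D) := Nat.mul_le_mul_right _ h5
      _ = 4*((m*Q)*(Q*D)) := by ring
    have h7 : 2*((m+t)*D) ≤ (m+t)*(Q*D) := by
      have : 2*D ≤ Q*D := Nat.mul_le_mul_right D (by omega)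
      calc 2*((m+t)*D) = (m+t)*(2*D) := by ring
      _ ≤ (m+t)*(Q*D) := Nat.mul_le_mul_left _ this
    nlinarith [h6, h7]

lemma final_bound (n m : ℕ) (hm : 1 ≤ m) (hmn : m < n) (ε : ℝ) (hε0 : 0 < ε)
    (hε : (m:ℝ) ≤ ε * n) :
    (1 - ε) * Hsum (2^n) ≤ Hsum (2^(n-m)) - ((2^m:ℕ):ℝ)/((2^n:ℕ):ℝ) + 1/((2^n:ℕ):ℝ) := by
  set t := n - m with htdef
  have ht : 1 ≤ t := by omega
  have hnmt : n = m + t := by omega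
  -- real versions
  set Q : ℕ := 2^t with hQdef
  set D : ℕ := 2^m with hDdef
  set N : ℕ := 2^n with hNdef
  have hNQD : N = Q * D := by rw [hNdef, hQdef, hDdef, hnmt, pow_add]; ring
  have hQ1 : 1 ≤ Q := Nat.one_le_two_pow
  have hD1 : 1 ≤ D := Nat.one_le_two_pow
  have hN1 : 1 ≤ N := Nat.one_le_two_pow
  have hQr : (1:ℝ) ≤ (Q:ℝ) := by exact_mod_cast hQ1
  have hDr : (1:ℝ) ≤ (D:ℝ) := by exact_mod_cast hD1
  have hNr : (1:ℝ) ≤ (N:ℝ) := by exact_mod_cast hN1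
  have hnr : (0:ℝ) < (n:ℝ) := by
    have : 0 < n := by omega
    exact_mod_cast this
  have hQN : Q ≤ N := by
    rw [hNQD]; exact Nat.le_mul_of_pos_right Q (by omega)
  -- lower bound for Hsum N
  have hHN_low : (n:ℝ) * Real.log 2 + 1/2 + 1/(2*(N:ℝ)) ≤ Hsum N := by
    have h := Hsum_ge N hN1
    have e : Real.log (N:ℝ) = (n:ℝ) * Real.log 2 := by
      rw [hNdef]; push_cast; rw [Real.log_pow]
    rw [e] at h; exact h
  -- upper bound for Hsum N - Hsum Q
  have hdiff : Hsum N - Hsum Q ≤ (m:ℝ) * Real.log 2 + 1/(2*(N:ℝ)) - 2/(4*(Q:ℝ)+1) := by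
    have h := Hsum_diff Q N hQ1 hQN
    have b1 : Real.log (2*(N:ℝ)+1) - Real.log (2*(N:ℝ)) ≤ 1/(2*(N:ℝ)) := by
      have e : Real.log (2*(N:ℝ)+1) - Real.log (2*(N:ℝ)) = Real.log ((2*(N:ℝ)+1)/(2*(N:ℝ))) := by
        rw [Real.log_div (by linarith) (by linarith)]
      rw [e]
      have := Real.log_le_sub_one_of_pos (x := (2*(N:ℝ)+1)/(2*(N:ℝ))) (by positivity)
      calc Real.log ((2*(N:ℝ)+1)/(2*(N:ℝ))) ≤ (2*(N:ℝ)+1)/(2*(N:ℝ)) - 1 := this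
        _ = 1/(2*(N:ℝ)) := by field_simp; ring
    have b2 : 2/(4*(Q:ℝ)+1) ≤ Real.log (2*(Q:ℝ)+1) - Real.log (2*(Q:ℝ)) := by
      have hx0 : (0:ℝ) ≤ 1/(4*(Q:ℝ)+1) := by positivity
      have hx2 : 1/(4*(Q:ℝ)+1) ≤ 1/2 := by
        rw [div_le_div_iff₀ (by linarith) (by norm_num)]; linarith
      have hl := log_lower hx0 hx2
      have hpos1 : (0:ℝ) < 1 - 1/(4*(Q:ℝ)+1) := by linarith [hx2]
      have e : (1+1/(4*(Q:ℝ)+1))/(1-1/(4*(Q:ℝ)+1)) = (2*(Q:ℝ)+1)/(2*(Q:ℝ)) := by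
        rw [div_eq_div_iff (ne_of_gt hpos1) (by positivity)]
        field_simp
        ring
      rw [e] at hl
      have e2 : Real.log ((2*(Q:ℝ)+1)/(2*(Q:ℝ))) = Real.log (2*(Q:ℝ)+1) - Real.log (2*(Q:ℝ)) := by
        rw [Real.log_div (by linarith) (by linarith)]
      rw [e2] at hl
      have e3 : 2*(1/(4*(Q:ℝ)+1)) = 2/(4*(Q:ℝ)+1) := by ring
      rw [e3] at hl
      exact hl
    have b3 : Real.log (2*(N:ℝ)) - Real.log (2*(Q:ℝ)) = (m:ℝ) * Real.log 2 := by
      rw [Real.log_mul (by norm_num) (by linarith), Real.log_mul (by norm_num) (by linarith)]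
      have eN : Real.log (N:ℝ) = (n:ℝ) * Real.log 2 := by
        rw [hNdef]; push_cast; rw [Real.log_pow]
      have eQ : Real.log (Q:ℝ) = (t:ℝ) * Real.log 2 := by
        rw [hQdef]; push_cast; rw [Real.log_pow]
      rw [eN, eQ]
      have : (n:ℝ) = (m:ℝ) + (t:ℝ) := by exact_mod_cast congrArg (Nat.cast : ℕ → ℝ) hnmt
      rw [this]; ring
    linarith
  -- the KEY fraction inequality
  have hKEY : 1/(2*(N:ℝ)) + ((D:ℝ)-1)/(N:ℝ) ≤ 2/(4*(Q:ℝ)+1) + ((m:ℝ)/(n:ℝ))*(1/2 + 1/(2*(N:ℝ))) := by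
    have hnat := natarith m t hm ht
    have hcast : (n:ℝ)*(4*(Q:ℝ)+1)*(2*(D:ℝ)) ≤
        4*((N:ℝ))*(n:ℝ) + (m:ℝ)*((N:ℝ)+1)*(4*(Q:ℝ)+1) + (n:ℝ)*(4*(Q:ℝ)+1) := by
      have : ((m+t)*(4*2^t+1)*(2*2^m) : ℕ) ≤
          (4*(2^t*2^m)*(m+t) + m*(2^t*2^m+1)*(4*2^t+1) + (m+t)*(4*2^t+1) : ℕ) := hnat
      have hc := (Nat.cast_le (α := ℝ)).mpr this
      push_cast at hc
      have hnmtr : (n:ℝ) = (m:ℝ) + (t:ℝ) := by exact_mod_cast congrArg (Nat.cast : ℕ → ℝ) hnmt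
      have hNr' : (N:ℝ) = (Q:ℝ)*(D:ℝ) := by exact_mod_cast congrArg (Nat.cast : ℕ → ℝ) hNQD
      rw [hnmtr, hNr', hQdef, hDdef]
      push_cast
      linarith [hc]
    set den : ℝ := 2*(N:ℝ)*(n:ℝ)*(4*(Q:ℝ)+1) with hden
    have hdenpos : 0 < den := by rw [hden]; positivity
    have e1 : 1/(2*(N:ℝ)) + ((D:ℝ)-1)/(N:ℝ) = ((n:ℝ)*(4*(Q:ℝ)+1)*(2*(D:ℝ)-1))/den := by
      rw [hden]; field_simp; ring
    have e2 : 2/(4*(Q:ℝ)+1) + ((m:ℝ)/(n:ℝ))*(1/2 + 1/(2*(N:ℝ)))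
        = (4*(N:ℝ)*(n:ℝ) + (m:ℝ)*((N:ℝ)+1)*(4*(Q:ℝ)+1))/den := by
      rw [hden]; field_simp; ring
    rw [e1, e2]
    gcongr
    nlinarith [hcast]
  -- assemble
  have hl2 : (0:ℝ) < Real.log 2 := Real.log_pos (by norm_num)
  have h01 : ε*((n:ℝ)*Real.log 2 + 1/2 + 1/(2*(N:ℝ))) ≤ ε*Hsum N :=
    mul_le_mul_of_nonneg_left hHN_low hε0.le
  have h02 : (m:ℝ)*Real.log 2 ≤ ε*(n:ℝ)*Real.log 2 := by
    have := mul_le_mul_of_nonneg_right hε hl2.le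
    linarith [this]
  have h03 : ((m:ℝ)/(n:ℝ)) ≤ ε := (div_le_iff₀ hnr).mpr (by linarith [hε])
  have h04 : ((m:ℝ)/(n:ℝ))*(1/2 + 1/(2*(N:ℝ))) ≤ ε*(1/2+1/(2*(N:ℝ))) := by
    apply mul_le_mul_of_nonneg_right h03
    positivity
  have h05 : ε*((n:ℝ)*Real.log 2 + 1/2 + 1/(2*(N:ℝ)))
      = ε*(n:ℝ)*Real.log 2 + ε*(1/2+1/(2*(N:ℝ))) := by ring
  have e : (1-ε)*Hsum N = Hsum N - ε*Hsum N := by ring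
  have e2 : ((D:ℝ)-1)/(N:ℝ) = (D:ℝ)/(N:ℝ) - 1/(N:ℝ) := sub_div _ _ _
  rw [e]
  rw [e2] at hKEY
  linarith [hdiff, hKEY, h01, h02, h04]

lemma sum_weighted (D N Q : ℕ) (hN : 1 ≤ N) (hQ : 1 ≤ Q) (hQD : Q*D = N)
    (w : Fin D → ℝ) (hw0 : ∀ i, 0 ≤ w i) (hw1 : ∑ i, w i = 1) :
    Hsum Q - ((D:ℝ))/(N:ℝ) + 1/(N:ℝ) ≤ ∑ i, w i * Hsum (⌊(N:ℝ)*w i⌋₊) := by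
  have hNr : (0:ℝ) < (N:ℝ) := by exact_mod_cast Nat.lt_of_lt_of_le Nat.zero_lt_one hN
  have hD1 : 1 ≤ D := by
    by_contra h
    have : D = 0 := by omega
    rw [this] at hQD; omega
  set K : Fin D → ℕ := fun i => ⌊(N:ℝ)*w i⌋₊ with hK
  have hK1 : ∀ i, ((K i:ℕ):ℝ) ≤ (N:ℝ)*w i :=
    fun i => Nat.floor_le (mul_nonneg (le_of_lt hNr) (hw0 i))
  have hK2 : ∀ i, (N:ℝ)*w i < ((K i:ℕ):ℝ)+1 := fun i => Nat.lt_floor_add_one _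
  have hpw : ∀ i : Fin D, w i * Hsum Q - (Q:ℝ)/(N:ℝ) ≤ w i * Hsum (K i) - ((K i:ℕ):ℝ)/(N:ℝ) :=
    fun i => pointwise N Q (K i) (w i) (hw0 i) hN hQ (hK1 i) (hK2 i)
  have hsum1 : ∑ i, (w i * Hsum Q - (Q:ℝ)/(N:ℝ)) ≤ ∑ i, (w i * Hsum (K i) - ((K i:ℕ):ℝ)/(N:ℝ)) :=
    Finset.sum_le_sum (fun i _ => hpw i)
  have hL : ∑ i, (w i * Hsum Q - (Q:ℝ)/(N:ℝ)) = Hsum Q - (D:ℝ)*(Q:ℝ)/(N:ℝ) := by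
    rw [Finset.sum_sub_distrib, ← Finset.sum_mul, hw1, Finset.sum_const, Finset.card_univ,
      Fintype.card_fin, nsmul_eq_mul]
    ring
  have hKsum : (N:ℝ) + 1 - (D:ℝ) ≤ ∑ i, ((K i:ℕ):ℝ) := by
    have h1 : (N:ℝ) - (D:ℝ) < ∑ i, ((K i:ℕ):ℝ) := by
      have : ∑ i : Fin D, ((N:ℝ)*w i - 1) < ∑ i, ((K i:ℕ):ℝ) := by
        apply Finset.sum_lt_sum_of_nonempty
        · exact Finset.univ_nonempty_iff.mpr (by
            have : 0 < D := hD1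
            exact Fin.pos_iff_nonempty.mp this)
        · intro i _
          linarith [hK2 i]
      calc (N:ℝ) - (D:ℝ) = ∑ i : Fin D, ((N:ℝ)*w i - 1) := by
            rw [Finset.sum_sub_distrib, ← Finset.mul_sum, hw1, Finset.sum_const,
              Finset.card_univ, Fintype.card_fin, nsmul_eq_mul]
            ring
        _ < ∑ i, ((K i:ℕ):ℝ) := this
    -- integrality
    have h2 : ((∑ i, K i : ℕ):ℝ) = ∑ i, ((K i:ℕ):ℝ) := by push_cast; rfl
    have h3 : N < (∑ i, K i) + D := by
      have : (N:ℝ) < ((∑ i, K i : ℕ):ℝ) + (D:ℝ) := by rw [h2]; linarith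
      exact_mod_cast this
    have h4 : N + 1 ≤ (∑ i, K i) + D := h3
    have : ((N:ℕ):ℝ) + 1 ≤ ((∑ i, K i : ℕ):ℝ) + (D:ℝ) := by exact_mod_cast h4
    rw [h2] at this
    linarith
  have hR : ∑ i, (w i * Hsum (K i) - ((K i:ℕ):ℝ)/(N:ℝ))
      = (∑ i, w i * Hsum (K i)) - (∑ i, ((K i:ℕ):ℝ))/(N:ℝ) := by
    rw [Finset.sum_sub_distrib, Finset.sum_div]
  have hDQ : (D:ℝ)*(Q:ℝ) = (N:ℝ) := by
    have : ((Q*D:ℕ):ℝ) = (N:ℝ) := by exact_mod_cast congrArg (Nat.cast : ℕ → ℝ) hQD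
    push_cast at this
    linarith
  rw [hL, hR] at hsum1
  have hdivmono : ((N:ℝ)+1-(D:ℝ))/(N:ℝ) ≤ (∑ i, ((K i:ℕ):ℝ))/(N:ℝ) := by
    gcongr
  have e : ((N:ℝ)+1-(D:ℝ))/(N:ℝ) = 1 + 1/(N:ℝ) - (D:ℝ)/(N:ℝ) := by
    field_simp
  have e2 : (D:ℝ)*(Q:ℝ)/(N:ℝ) = 1 := by
    rw [hDQ]; exact div_self (ne_of_gt hNr)
  linarith [hsum1, hdivmono, e, e2]



set_option maxHeartbeats 2000000 in
/-- **Scalar core of the van Dam–Hayden embezzlement theorem.**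
With `C_n = √(∑_{j=1}^{2^n} 1/j)`, Schmidt coefficients `α` (nonnegative, squares summing
to 1), `γ_{(j,i)} = α_i / (C_n √j)`, and `g` a non-increasing rearrangement of `γ`
(indexed by `Fin (2^(n+m))`), the overlap `(1/C_n) ∑_{r=1}^{2^n} g_r / √r` is at least
`1 - ε`, provided `n ≥ m / ε`.  Here `j : Fin (2^n)` represents the integer `j + 1`. -/
theorem embezzlement_scalar_core (n m : ℕ) (hn : 0 < n) (hm : 0 < m)
    (ε : ℝ) (hε0 : 0 < ε) (hε1 : ε < 1) (hnm : (m : ℝ) / ε ≤ (n : ℝ))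
    (α : Fin (2 ^ m) → ℝ) (hα0 : ∀ i, 0 ≤ α i) (hα1 : ∑ i, α i ^ 2 = 1)
    (C : ℝ) (hC : C = Real.sqrt (∑ j : Fin (2 ^ n), 1 / ((j : ℝ) + 1)))
    (γ : Fin (2 ^ n) × Fin (2 ^ m) → ℝ)
    (hγ : ∀ p, γ p = α p.2 / (C * Real.sqrt ((p.1 : ℝ) + 1)))
    (σ : Fin (2 ^ (n + m)) ≃ Fin (2 ^ n) × Fin (2 ^ m))
    (g : Fin (2 ^ (n + m)) → ℝ) (hg : g = γ ∘ σ) (hanti : Antitone g) :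
    1 - ε ≤ (1 / C) * ∑ r : Fin (2 ^ n),
      g (Fin.castLE (Nat.pow_le_pow_right (by norm_num) (Nat.le_add_right n m)) r) /
        Real.sqrt ((r : ℝ) + 1) := by
  have hle : 2^n ≤ 2^(n+m) := Nat.pow_le_pow_right (by norm_num) (Nat.le_add_right n m)
  have hN0 : 0 < 2^n := Nat.pow_pos (by norm_num)
  have hNr : (0:ℝ) < ((2^n:ℕ):ℝ) := by exact_mod_cast hN0
  -- derived hypotheses on ε, m, n
  have hεn : (m:ℝ) ≤ ε * n := by
    rw [div_le_iff₀ hε0] at hnm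
    linarith [hnm]
  have hmn : m < n := by
    have h1 : (m:ℝ) < (n:ℝ) := by
      have hn' : (0:ℝ) < (n:ℝ) := by exact_mod_cast hn
      nlinarith [hεn, hε1, hn']
    exact_mod_cast h1
  -- weights
  set w := fun i : Fin (2^m) => α i ^ 2 with hwdef
  have hw0 : ∀ i, 0 ≤ w i := fun i => sq_nonneg _
  have hw1 : ∑ i, w i = 1 := hα1
  -- harmonic sum facts
  have hCsum : ∑ j : Fin (2^n), 1 / ((j : ℝ) + 1) = Hsum (2^n) :=
    Fin.sum_univ_eq_sum_range (fun k => 1/((k:ℝ)+1)) (2^n)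
  have hHpos : 0 < Hsum (2^n) := by
    rw [Hsum]
    apply Finset.sum_pos
    · intro k _; positivity
    · exact Finset.nonempty_range_iff.mpr (by omega)
  have hC0 : 0 < C := by
    rw [hC]
    apply Real.sqrt_pos.mpr
    rw [hCsum]; exact hHpos
  have hC2 : C^2 = Hsum (2^n) := by
    rw [hC, Real.sq_sqrt (by rw [hCsum]; exact le_of_lt hHpos), hCsum]
  have hγ0 : ∀ p, 0 ≤ γ p := by
    intro p
    rw [hγ p]
    apply div_nonneg (hα0 _)
    positivity
  -- the filter set
  set S' : Finset (Fin (2^n) × Fin (2^m)) :=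
    Finset.univ.filter (fun p => ((p.1 : ℕ):ℝ)+1 ≤ ((2^n:ℕ):ℝ) * w p.2) with hS'
  -- comparison of γ values
  have hcomp : ∀ p q : Fin (2^n) × Fin (2^m), γ p ≤ γ q →
      (((q.1:ℕ):ℝ)+1) * w p.2 ≤ (((p.1:ℕ):ℝ)+1) * w q.2 := by
    intro p q h
    rw [hγ p, hγ q] at h
    have hA0 : (0:ℝ) < Real.sqrt (((p.1:ℕ):ℝ)+1) := Real.sqrt_pos.mpr (by positivity)
    have hB0 : (0:ℝ) < Real.sqrt (((q.1:ℕ):ℝ)+1) := Real.sqrt_pos.mpr (by positivity)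
    have h1 := (div_le_div_iff₀ (by positivity) (by positivity)).mp h
    have h2 : C * (α p.2 * Real.sqrt (((q.1:ℕ):ℝ)+1)) ≤ C * (α q.2 * Real.sqrt (((p.1:ℕ):ℝ)+1)) := by
      calc C * (α p.2 * Real.sqrt (((q.1:ℕ):ℝ)+1))
          = α p.2 * (C * Real.sqrt (((q.1:ℕ):ℝ)+1)) := by ring
        _ ≤ α q.2 * (C * Real.sqrt (((p.1:ℕ):ℝ)+1)) := h1
        _ = C * (α q.2 * Real.sqrt (((p.1:ℕ):ℝ)+1)) := by ring
    have h3 : α p.2 * Real.sqrt (((q.1:ℕ):ℝ)+1) ≤ α q.2 * Real.sqrt (((p.1:ℕ):ℝ)+1) :=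
      le_of_mul_le_mul_left h2 hC0
    have h4 := mul_le_mul h3 h3 (mul_nonneg (hα0 p.2) (Real.sqrt_nonneg _))
      (mul_nonneg (hα0 q.2) (Real.sqrt_nonneg _))
    have hBB : Real.sqrt (((q.1:ℕ):ℝ)+1) * Real.sqrt (((q.1:ℕ):ℝ)+1) = ((q.1:ℕ):ℝ)+1 :=
      Real.mul_self_sqrt (by positivity)
    have hAA : Real.sqrt (((p.1:ℕ):ℝ)+1) * Real.sqrt (((p.1:ℕ):ℝ)+1) = ((p.1:ℕ):ℝ)+1 :=
      Real.mul_self_sqrt (by positivity)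
    calc (((q.1:ℕ):ℝ)+1) * w p.2
        = (α p.2 * Real.sqrt (((q.1:ℕ):ℝ)+1)) * (α p.2 * Real.sqrt (((q.1:ℕ):ℝ)+1)) := by
          rw [hwdef]; simp only []
          rw [show (α p.2 * Real.sqrt (((q.1:ℕ):ℝ)+1)) * (α p.2 * Real.sqrt (((q.1:ℕ):ℝ)+1))
            = (Real.sqrt (((q.1:ℕ):ℝ)+1) * Real.sqrt (((q.1:ℕ):ℝ)+1)) * (α p.2)^2 by ring, hBB]
      _ ≤ (α q.2 * Real.sqrt (((p.1:ℕ):ℝ)+1)) * (α q.2 * Real.sqrt (((p.1:ℕ):ℝ)+1)) := h4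
      _ = (((p.1:ℕ):ℝ)+1) * w q.2 := by
          rw [hwdef]; simp only []
          rw [show (α q.2 * Real.sqrt (((p.1:ℕ):ℝ)+1)) * (α q.2 * Real.sqrt (((p.1:ℕ):ℝ)+1))
            = (Real.sqrt (((p.1:ℕ):ℝ)+1) * Real.sqrt (((p.1:ℕ):ℝ)+1)) * (α q.2)^2 by ring, hAA]
  -- w positive on S'
  have hwpos : ∀ p ∈ S', 0 < w p.2 := by
    intro p hp
    rw [hS', Finset.mem_filter] at hp
    nlinarith [hp.2, hNr, hw0 p.2]
  -- rank bound
  have hrank : ∀ p ∈ S', (((σ.symm p : ℕ) : ℝ) + 1) ≤ (((p.1:ℕ):ℝ)+1) / w p.2 := by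
    intro p hp
    have hw' : 0 < w p.2 := hwpos p hp
    -- Part A: rank+1 ≤ card of the superlevel set
    have hA : (σ.symm p : ℕ) + 1 ≤ (Finset.univ.filter (fun q => γ p ≤ γ q)).card := by
      have hcard : (Finset.Iic (σ.symm p)).card = (σ.symm p : ℕ) + 1 := Fin.card_Iic _
      rw [← hcard]
      apply Finset.card_le_card_of_injOn σ
      · intro x hx
        rw [Finset.mem_coe, Finset.mem_Iic] at hx
        rw [Finset.mem_coe, Finset.mem_filter]
        refine ⟨Finset.mem_univ _, ?_⟩
        have h1 : g (σ.symm p) ≤ g x := hanti hx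
        have e1 : g (σ.symm p) = γ p := by rw [hg]; simp
        have e2 : g x = γ (σ x) := by rw [hg]; simp
        rw [e1, e2] at h1; exact h1
      · exact (Equiv.injective σ).injOn
    -- Part B: real-valued bound on the card
    have hB : (((Finset.univ.filter (fun q => γ p ≤ γ q)).card : ℕ) : ℝ)
        ≤ (((p.1:ℕ):ℝ)+1) / w p.2 := by
      have hsplit : (Finset.univ.filter (fun q => γ p ≤ γ q)).card
          = ∑ i' : Fin (2^m),
            (Finset.univ.filter (fun j' : Fin (2^n) => γ p ≤ γ (j', i'))).card := by
        rw [Finset.card_filter, Fintype.sum_prod_type, Finset.sum_comm]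
        refine Finset.sum_congr rfl fun i' _ => (Finset.card_filter _ _).symm
      have hper : ∀ i' : Fin (2^m),
          (((Finset.univ.filter (fun j' : Fin (2^n) => γ p ≤ γ (j', i'))).card : ℕ) : ℝ)
          ≤ (((p.1:ℕ):ℝ)+1) * w i' / w p.2 := by
        intro i'
        set B : ℝ := (((p.1:ℕ):ℝ)+1) * w i' / w p.2 with hBdef
        have hB0 : 0 ≤ B := by
          rw [hBdef]
          apply div_nonneg (mul_nonneg (by positivity) (hw0 i')) (le_of_lt hw')
        have hsub : ∀ j' ∈ Finset.univ.filter (fun j' : Fin (2^n) => γ p ≤ γ (j', i')),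
            (j' : ℕ) ∈ Finset.range ⌊B⌋₊ := by
          intro j' hj'
          rw [Finset.mem_filter] at hj'
          have h1 := hcomp p (j', i') hj'.2
          have h2 : ((j':ℕ):ℝ)+1 ≤ B := by
            rw [hBdef, le_div_iff₀ hw']
            exact h1
          have h3 : (j' : ℕ) + 1 ≤ ⌊B⌋₊ := by
            apply Nat.le_floor
            push_cast
            exact h2
          rw [Finset.mem_range]
          omega
        have hcard2 := Finset.card_le_card_of_injOn (Fin.val (n := 2^n)) hsub
          (Fin.val_injective.injOn)
        rw [Finset.card_range] at hcard2
        calc (((Finset.univ.filter (fun j' : Fin (2^n) => γ p ≤ γ (j', i'))).card : ℕ) : ℝ)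
            ≤ ((⌊B⌋₊ : ℕ) : ℝ) := by exact_mod_cast hcard2
          _ ≤ B := Nat.floor_le hB0
      calc (((Finset.univ.filter (fun q => γ p ≤ γ q)).card : ℕ) : ℝ)
          = ∑ i' : Fin (2^m),
            (((Finset.univ.filter (fun j' : Fin (2^n) => γ p ≤ γ (j', i'))).card : ℕ) : ℝ) := by
            rw [hsplit]; push_cast; try rfl
        _ ≤ ∑ i' : Fin (2^m), (((p.1:ℕ):ℝ)+1) * w i' / w p.2 :=
            Finset.sum_le_sum (fun i' _ => hper i')
        _ = (((p.1:ℕ):ℝ)+1) / w p.2 := by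
            rw [show (fun i' : Fin (2^m) => (((p.1:ℕ):ℝ)+1) * w i' / w p.2)
              = (fun i' : Fin (2^m) => ((((p.1:ℕ):ℝ)+1) / w p.2) * w i') from by
                funext i'; ring]
            rw [← Finset.mul_sum, hw1, mul_one]
    have hA' : (((σ.symm p : ℕ) : ℝ) + 1)
        ≤ (((Finset.univ.filter (fun q => γ p ≤ γ q)).card : ℕ) : ℝ) := by
      exact_mod_cast hA
    linarith
  -- rank < 2^n on S'
  have hltN : ∀ p ∈ S', (σ.symm p : ℕ) < 2^n := by
    intro p hp
    have h1 := hrank p hp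
    have hw' := hwpos p hp
    rw [hS', Finset.mem_filter] at hp
    have h2 : (((p.1:ℕ):ℝ)+1) / w p.2 ≤ ((2^n:ℕ):ℝ) := by
      rw [div_le_iff₀ hw']
      exact hp.2
    have h3 : (((σ.symm p : ℕ) : ℝ) + 1) ≤ ((2^n:ℕ):ℝ) := le_trans h1 h2
    have h4 : ((σ.symm p : ℕ) : ℝ) < ((2^n:ℕ):ℝ) := by linarith
    exact_mod_cast h4
  -- the slot map
  set ι := fun p : Fin (2^n) × Fin (2^m) =>
    (⟨(σ.symm p : ℕ) % 2^n, Nat.mod_lt _ hN0⟩ : Fin (2^n)) with hι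
  have hιval : ∀ p ∈ S', ((ι p : ℕ) : ℝ) = ((σ.symm p : ℕ) : ℝ) := by
    intro p hp
    have := hltN p hp
    simp only [hι]
    rw [Nat.mod_eq_of_lt this]
  -- per-term bound
  have hterm : ∀ p ∈ S',
      w p.2 / (C * (((p.1:ℕ):ℝ)+1)) ≤ g (Fin.castLE hle (ι p)) / Real.sqrt (((ι p : ℕ):ℝ)+1) := by
    intro p hp
    have hw' := hwpos p hp
    have hR := hrank p hp
    have hgval : g (Fin.castLE hle (ι p)) = γ p := by
      have e : Fin.castLE hle (ι p) = σ.symm p := by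
        apply Fin.ext
        have h0 : ((ι p : ℕ)) = (σ.symm p : ℕ) := by
          simp only [hι]; exact Nat.mod_eq_of_lt (hltN p hp)
        simpa using h0
      rw [e, hg]; simp
    rw [hgval, hιval p hp]
    have hRpos : (0:ℝ) < ((σ.symm p : ℕ):ℝ)+1 := by positivity
    rw [div_le_div_iff₀ (by positivity) (Real.sqrt_pos.mpr hRpos)]
    have hsw : Real.sqrt (w p.2) = α p.2 := Real.sqrt_sq (hα0 p.2)
    have hsq : Real.sqrt (((p.1:ℕ):ℝ)+1) * Real.sqrt (((p.1:ℕ):ℝ)+1) = ((p.1:ℕ):ℝ)+1 :=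
      Real.mul_self_sqrt (by positivity)
    have hsqrtw : (0:ℝ) < Real.sqrt (w p.2) := Real.sqrt_pos.mpr hw'
    have h3 : Real.sqrt (((σ.symm p : ℕ):ℝ)+1)
        ≤ Real.sqrt (((p.1:ℕ):ℝ)+1) / Real.sqrt (w p.2) := by
      rw [← Real.sqrt_div (by positivity)]
      exact Real.sqrt_le_sqrt hR
    have h4 : w p.2 * Real.sqrt (((σ.symm p : ℕ):ℝ)+1)
        ≤ α p.2 * Real.sqrt (((p.1:ℕ):ℝ)+1) := by
      calc w p.2 * Real.sqrt (((σ.symm p : ℕ):ℝ)+1)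
          ≤ w p.2 * (Real.sqrt (((p.1:ℕ):ℝ)+1) / Real.sqrt (w p.2)) :=
            mul_le_mul_of_nonneg_left h3 (hw0 p.2)
        _ = α p.2 * Real.sqrt (((p.1:ℕ):ℝ)+1) := by
            rw [← hsw]
            rw [mul_div_assoc', div_eq_iff hsqrtw.ne']
            linear_combination (-1)*Real.sqrt (((p.1:ℕ):ℝ)+1) * Real.sq_sqrt (hw0 p.2)
    have h5 : γ p * (C * (((p.1:ℕ):ℝ)+1)) = α p.2 * Real.sqrt (((p.1:ℕ):ℝ)+1) := by
      rw [hγ p]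
      have hsp : Real.sqrt (((p.1:ℕ):ℝ)+1) ≠ 0 := by positivity
      rw [div_mul_eq_mul_div, div_eq_iff (mul_ne_zero hC0.ne' hsp)]
      linear_combination (-1) * α p.2 * C * (Real.sq_sqrt (show (0:ℝ) ≤ ((p.1:ℕ):ℝ)+1 by positivity))
    linarith [h4, h5]
  -- injectivity
  have hinj : Set.InjOn ι S' := by
    intro p hp q hq hpq
    have hp' := hltN p (by simpa using hp)
    have hq' := hltN q (by simpa using hq)
    have h5 : (σ.symm p : ℕ) = (σ.symm q : ℕ) := by
      have h1 : (σ.symm p : ℕ) % 2^n = (σ.symm q : ℕ) % 2^n := congrArg Fin.val hpq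
      rwa [Nat.mod_eq_of_lt hp', Nat.mod_eq_of_lt hq'] at h1
    have h6 : σ.symm p = σ.symm q := Fin.ext h5
    exact σ.symm.injective h6
  -- sum manipulations
  have hg0 : ∀ x, 0 ≤ g x := by
    intro x; rw [hg]; exact hγ0 _
  have hstep1 : ∑ p ∈ S', w p.2 / (C * (((p.1:ℕ):ℝ)+1)) ≤
      ∑ r : Fin (2^n), g (Fin.castLE hle r) / Real.sqrt ((r:ℝ)+1) := by
    calc ∑ p ∈ S', w p.2 / (C * (((p.1:ℕ):ℝ)+1))
        ≤ ∑ p ∈ S', g (Fin.castLE hle (ι p)) / Real.sqrt (((ι p : ℕ):ℝ)+1) :=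
          Finset.sum_le_sum hterm
      _ = ∑ r ∈ S'.image ι, g (Fin.castLE hle r) / Real.sqrt (((r : ℕ):ℝ)+1) :=
          (Finset.sum_image (g := ι)
            (f := fun r : Fin (2^n) => g (Fin.castLE hle r) / Real.sqrt (((r : ℕ):ℝ)+1))
            (fun x hx y hy hxy => hinj hx hy hxy)).symm
      _ ≤ ∑ r : Fin (2^n), g (Fin.castLE hle r) / Real.sqrt (((r : ℕ):ℝ)+1) := by
          apply Finset.sum_le_sum_of_subset_of_nonneg (Finset.subset_univ _)
          intro r _ _
          exact div_nonneg (hg0 _) (Real.sqrt_nonneg _)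
  have hwle : ∀ i, w i ≤ 1 := by
    intro i
    have h1 : w i ≤ ∑ i', w i' := Finset.single_le_sum (fun i' _ => hw0 i') (Finset.mem_univ i)
    rw [hw1] at h1; exact h1
  have hstep4 : ∑ p ∈ S', w p.2 / (C * (((p.1:ℕ):ℝ)+1))
      = (1/C) * ∑ i, w i * Hsum (⌊((2^n:ℕ):ℝ)*w i⌋₊) := by
    rw [hS', Finset.sum_filter, Fintype.sum_prod_type, Finset.sum_comm]
    have hinner : ∀ i : Fin (2^m),
        (∑ j : Fin (2^n), if (((j:ℕ):ℝ)+1 ≤ ((2^n:ℕ):ℝ) * w i)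
          then w i / (C * (((j:ℕ):ℝ)+1)) else 0)
        = (1/C) * (w i * Hsum (⌊((2^n:ℕ):ℝ)*w i⌋₊)) := by
      intro i
      rw [Fin.sum_univ_eq_sum_range
        (fun k => if ((k:ℝ)+1 ≤ ((2^n:ℕ):ℝ) * w i) then w i / (C * ((k:ℝ)+1)) else 0) (2^n)]
      have hKiN : ⌊((2^n:ℕ):ℝ)*w i⌋₊ ≤ 2^n := by
        have h1 : ((2^n:ℕ):ℝ)*w i ≤ ((2^n:ℕ):ℝ) := by
          nlinarith [hwle i, hNr, hw0 i]
        calc ⌊((2^n:ℕ):ℝ)*w i⌋₊ ≤ ⌊((2^n:ℕ):ℝ)⌋₊ := Nat.floor_le_floor h1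
          _ = 2^n := Nat.floor_natCast _
      have hcond : ∀ k : ℕ, ((k:ℝ)+1 ≤ ((2^n:ℕ):ℝ) * w i) ↔ k < ⌊((2^n:ℕ):ℝ)*w i⌋₊ := by
        intro k
        rw [Nat.lt_iff_add_one_le, Nat.le_floor_iff (mul_nonneg (le_of_lt hNr) (hw0 i))]
        push_cast
        rfl
      calc ∑ k ∈ Finset.range (2^n),
            (if ((k:ℝ)+1 ≤ ((2^n:ℕ):ℝ) * w i) then w i / (C * ((k:ℝ)+1)) else 0)
          = ∑ k ∈ Finset.range (2^n),
            (if (k < ⌊((2^n:ℕ):ℝ)*w i⌋₊) then w i / (C * ((k:ℝ)+1)) else 0) := by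
            refine Finset.sum_congr rfl fun k _ => ?_
            exact if_congr (hcond k) rfl rfl
        _ = ∑ k ∈ Finset.range (⌊((2^n:ℕ):ℝ)*w i⌋₊), w i / (C * ((k:ℝ)+1)) := by
            rw [← Finset.sum_filter]
            congr 1
            ext k
            simp only [Finset.mem_filter, Finset.mem_range]
            omega
        _ = (1/C) * (w i * Hsum (⌊((2^n:ℕ):ℝ)*w i⌋₊)) := by
            rw [Hsum, Finset.mul_sum, Finset.mul_sum]
            refine Finset.sum_congr rfl fun k _ => ?_
            have hk1 : ((k:ℝ)+1) ≠ 0 := by positivity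
            field_simp
            try ring
    rw [Finset.sum_congr rfl (fun i _ => hinner i), ← Finset.mul_sum]
  -- final assembly
  have hQD : 2^(n-m) * 2^m = 2^n := by
    rw [← pow_add]
    congr 1
    omega
  have hsw := sum_weighted (2^m) (2^n) (2^(n-m)) Nat.one_le_two_pow Nat.one_le_two_pow hQD
    w hw0 hw1
  have hfb := final_bound n m (by omega) hmn ε hε0 hεn
  have hmain : (1/C) * ∑ p ∈ S', w p.2 / (C * (((p.1:ℕ):ℝ)+1))
      ≤ (1/C) * ∑ r : Fin (2^n), g (Fin.castLE hle r) / Real.sqrt ((r:ℝ)+1) :=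
    mul_le_mul_of_nonneg_left hstep1 (by positivity)
  rw [hstep4] at hmain
  have e3 : (1/C) * ((1/C) * ∑ i, w i * Hsum (⌊((2^n:ℕ):ℝ)*w i⌋₊))
      = (∑ i, w i * Hsum (⌊((2^n:ℕ):ℝ)*w i⌋₊)) / Hsum (2^n) := by
    rw [← hC2]
    have hCne : C ≠ 0 := ne_of_gt hC0
    field_simp
    try ring
    try exact Or.inl trivial
    simp_rw [mul_comm (w _) ((2^n:ℕ):ℝ)]
  rw [e3] at hmain
  have h7 : 1 - ε ≤ (∑ i, w i * Hsum (⌊((2^n:ℕ):ℝ)*w i⌋₊)) / Hsum (2^n) := by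
    rw [le_div_iff₀ hHpos]
    calc (1-ε) * Hsum (2^n)
        ≤ Hsum (2^(n-m)) - ((2^m:ℕ):ℝ)/((2^n:ℕ):ℝ) + 1/((2^n:ℕ):ℝ) := hfb
      _ ≤ ∑ i, w i * Hsum (⌊((2^n:ℕ):ℝ)*w i⌋₊) := hsw
  calc 1 - ε ≤ (∑ i, w i * Hsum (⌊((2^n:ℕ):ℝ)*w i⌋₊)) / Hsum (2^n) := h7
    _ ≤ (1/C) * ∑ r : Fin (2^n), g (Fin.castLE hle r) / Real.sqrt ((r:ℝ)+1) := hmain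
end

section
/- Let n, m be positive integers, let ε be a real number with 0 < ε < 1 and suppose n ≥ m/ε. Let (θ_i) and (θ'_i) be orthonormal families in ℂ^{2^m}, let α : Fin (2^m) → ℝ with α_i ≥ 0 and ∑_i α_i² = 1, and let ψ = ∑_i α_i · θ_i ⊗ θ'_i ∈ ℂ^{2^m} ⊗ ℂ^{2^m}. Define γ : Fin (2^n) × Fin (2^m) → ℝ by γ_{(j,i)} = α_i/(C_n √j), and fix a bijection σ : Fin (2^{n+m}) → Fin (2^n) × Fin (2^m) with γ ∘ σ antitone; write σ(r) = (j_r, i_r). Define the embezzled state E(ψ) = (1/C_n) · ∑_{r=1}^{2^n} (1/√r) · (e_{j_r} ⊗ θ_{i_r}) ⊗ (e_{j_r} ⊗ θ'_{i_r}) ∈ (ℂ^{2^n} ⊗ ℂ^{2^m}) ⊗ (ℂ^{2^n} ⊗ ℂ^{2^m}), and let Φ be the canonical unitary reordering of tensor factors from (ℂ^{2^n} ⊗ ℂ^{2^n}) ⊗ (ℂ^{2^m} ⊗ ℂ^{2^m}) to (ℂ^{2^n} ⊗ ℂ^{2^m}) ⊗ (ℂ^{2^n} ⊗ ℂ^{2^m}).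 Then the inner product ⟨Φ(μ_n ⊗ ψ), E(ψ)⟩ is real and at least 1 − ε. -/
/-- Tensor product of vectors, in the function model of the tensor product of
Euclidean spaces: `(x ⊗ y) (a, b) = x a * y b`. -/
noncomputable def tens {ι κ : Type*} (x : EuclideanSpace ℂ ι) (y : EuclideanSpace ℂ κ) :
    EuclideanSpace ℂ (ι × κ) :=
  WithLp.toLp 2 (fun p : ι × κ => x p.1 * y p.2)

/-- `C_n = √ (∑_{j=1}^{2^n} 1/j)` (here `j : Fin (2^n)` represents the integer `j + 1`). -/
noncomputable def Cconst (n : ℕ) : ℝ := Real.sqrt (∑ j : Fin (2 ^ n), 1 / ((j : ℝ) + 1))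

/-- The van Dam–Hayden embezzlement state
`μ_n = (1/C_n) ∑_{j=1}^{2^n} (1/√j) e_j ⊗ e_j` on `ℂ^{2^n} ⊗ ℂ^{2^n}`. -/
noncomputable def embezState (n : ℕ) : EuclideanSpace ℂ (Fin (2 ^ n) × Fin (2 ^ n)) :=
  ∑ j : Fin (2 ^ n), ((1 / (Cconst n * Real.sqrt ((j : ℝ) + 1)) : ℝ) : ℂ) •
    tens (EuclideanSpace.single j 1) (EuclideanSpace.single j 1)

/-- The canonical unitary reordering `Φ` of tensor factors, from
`(ℂ^a ⊗ ℂ^b) ⊗ (ℂ^c ⊗ ℂ^d)` to `(ℂ^a ⊗ ℂ^c) ⊗ (ℂ^b ⊗ ℂ^d)`, in the function model. -/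
noncomputable def reorder {a b c d : Type*}
    (v : EuclideanSpace ℂ ((a × b) × (c × d))) :
    EuclideanSpace ℂ ((a × c) × (b × d)) :=
  WithLp.toLp 2 (fun p : (a × c) × (b × d) => v ((p.1.1, p.2.1), (p.1.2, p.2.2)))

/-! ### Auxiliary lemmas -/

section Aux

lemma tens_apply {ι κ : Type*} (x : EuclideanSpace ℂ ι) (y : EuclideanSpace ℂ κ) (p : ι × κ) :
    tens x y p = x p.1 * y p.2 := rfl

lemma sum_apply_E {ι β : Type*} [Fintype β] (f : β → EuclideanSpace ℂ ι) (i : ι) :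
    (∑ b : β, f b) i = ∑ b : β, f b i :=
  by rw [WithLp.ofLp_sum]; exact Finset.sum_apply i Finset.univ _

lemma smul_apply_E {ι : Type*} (c : ℂ) (x : EuclideanSpace ℂ ι) (i : ι) :
    (c • x) i = c * x i := rfl

lemma inner_eq_sum {ι : Type*} [Fintype ι] (x y : EuclideanSpace ℂ ι) :
    (inner ℂ x y : ℂ) = ∑ i, (starRingEnd ℂ) (x i) * y i := by
  simp [PiLp.inner_apply, RCLike.inner_apply]
  exact Finset.sum_congr rfl fun i _ => mul_comm _ _

lemma embez_apply (n : ℕ) (j j' : Fin (2^n)) :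
    embezState n (j, j') =
      if j = j' then ((1 / (Cconst n * Real.sqrt ((j : ℝ) + 1)) : ℝ) : ℂ) else 0 := by
  rw [embezState, sum_apply_E]
  simp only [smul_apply_E, tens_apply, EuclideanSpace.single_apply]
  simp only [mul_ite, mul_one, mul_zero, ite_and]
  rw [Finset.sum_ite_eq Finset.univ j'
    (fun k => if j = k then ((1 / (Cconst n * Real.sqrt ((k : ℝ) + 1)) : ℝ) : ℂ) else 0)]
  simp only [Finset.mem_univ, if_true]
  by_cases h : j = j' <;> simp [h]

lemma pull_ite {β : Type*} [Fintype β] (c : Prop) [Decidable c] (f : β → ℂ) :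
    (∑ x : β, if c then f x else 0) = if c then ∑ x : β, f x else 0 := by
  split <;> simp

lemma key1 {a b : Type*} [Fintype a] [DecidableEq a] [Fintype b]
    (μ : EuclideanSpace ℂ (a × a)) (ψ : EuclideanSpace ℂ (b × b))
    (j₀ : a) (u v : EuclideanSpace ℂ b) :
    (inner ℂ (reorder (tens μ ψ))
      (tens (tens (EuclideanSpace.single j₀ 1) u) (tens (EuclideanSpace.single j₀ 1) v)) : ℂ)
    = (starRingEnd ℂ) (μ (j₀, j₀)) * ∑ i, ∑ i', (starRingEnd ℂ) (ψ (i, i')) * (u i * v i') := by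
  rw [inner_eq_sum]
  rw [Fintype.sum_prod_type]
  simp only [tens_apply, reorder]
  rw [Fintype.sum_prod_type]
  simp only [Fintype.sum_prod_type, EuclideanSpace.single_apply, map_mul]
  simp only [mul_ite, ite_mul, one_mul, zero_mul, mul_zero, mul_one,
    Finset.sum_ite_eq', Finset.mem_univ, if_true, zero_mul]
  simp only [pull_ite, Finset.sum_ite_eq', Finset.mem_univ, if_true, Finset.mul_sum]
  apply Finset.sum_congr rfl
  intro i _
  apply Finset.sum_congr rfl
  intro i' _
  ring

lemma inner_tens {ι κ : Type*} [Fintype ι] [Fintype κ]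
    (x y : EuclideanSpace ℂ ι) (z w : EuclideanSpace ℂ κ) :
    (inner ℂ (tens x z) (tens y w) : ℂ) = (inner ℂ x y : ℂ) * (inner ℂ z w : ℂ) := by
  simp only [inner_eq_sum, tens_apply, Fintype.sum_prod_type, map_mul]
  rw [Finset.sum_mul_sum]
  apply Finset.sum_congr rfl; intro i _
  apply Finset.sum_congr rfl; intro j _
  ring

lemma double_sum_inner {b : Type*} [Fintype b] (ψ : EuclideanSpace ℂ (b × b))
    (u v : EuclideanSpace ℂ b) :
    ∑ i, ∑ i', (starRingEnd ℂ) (ψ (i, i')) * (u i * v i') = (inner ℂ ψ (tens u v) : ℂ) := by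
  rw [inner_eq_sum, Fintype.sum_prod_type]
  simp only [tens_apply]

lemma key2 {b c : Type*} [Fintype b] [Fintype c] [DecidableEq c]
    (θ θ' : c → EuclideanSpace ℂ b) (hθ : Orthonormal ℂ θ) (hθ' : Orthonormal ℂ θ')
    (α : c → ℝ) (k : c) :
    (inner ℂ (∑ t, ((α t : ℝ) : ℂ) • tens (θ t) (θ' t)) (tens (θ k) (θ' k)) : ℂ)
      = ((α k : ℝ) : ℂ) := by
  rw [sum_inner]
  have h : ∀ t : c, (inner ℂ (((α t : ℝ) : ℂ) • tens (θ t) (θ' t)) (tens (θ k) (θ' k)) : ℂ)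
      = ((α t : ℝ) : ℂ) * ((if t = k then 1 else 0) * (if t = k then 1 else 0)) := by
    intro t
    rw [inner_smul_left, inner_tens, orthonormal_iff_ite.mp hθ, orthonormal_iff_ite.mp hθ',
      Complex.conj_ofReal]
  simp only [h]
  simp

/-- partial sums of the harmonic series -/
noncomputable def Lharm (N : ℕ) : ℝ := ∑ j ∈ Finset.range N, 1/((j:ℝ)+1)

lemma log_le_Lharm (N : ℕ) : Real.log (N+1) ≤ Lharm N := by
  induction N with
  | zero => simp [Lharm]
  | succ N ih =>
    have h1 : Real.log (N+1+1) - Real.log (N+1) ≤ 1/((N:ℝ)+1+1-1) := by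
      have hpos : (0:ℝ) < ((N:ℝ)+1+1)/((N:ℝ)+1) := by positivity
      have h := Real.log_le_sub_one_of_pos hpos
      rw [Real.log_div (by positivity) (by positivity)] at h
      calc Real.log (N+1+1) - Real.log (N+1) ≤ ((N:ℝ)+1+1)/((N:ℝ)+1) - 1 := h
        _ = 1/((N:ℝ)+1+1-1) := by field_simp; ring
    rw [Lharm, Finset.sum_range_succ, ← Lharm]
    push_cast
    have h2 : 1/((N:ℝ)+1+1-1) = 1/((N:ℝ)+1) := by ring_nf
    nlinarith [ih]

lemma Lharm_sub_le (M : ℕ) (hM : 1 ≤ M) :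
    ∀ N, M ≤ N → Lharm N ≤ Lharm M + (Real.log N - Real.log M) := by
  refine Nat.le_induction ?_ ?_
  · simp
  · intro N hMN ih
    have hN1 : (1:ℝ) ≤ (N:ℝ) := by exact_mod_cast hM.trans hMN
    have h1 : 1/((N:ℝ)+1) ≤ Real.log (N+1) - Real.log N := by
      have hpos : (0:ℝ) < (N:ℝ)/((N:ℝ)+1) := by positivity
      have h := Real.log_le_sub_one_of_pos hpos
      rw [Real.log_div (by positivity) (by positivity)] at h
      have heq : (N:ℝ)/((N:ℝ)+1) - 1 = -(1/((N:ℝ)+1)) := by field_simp; ring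
      linarith [heq ▸ h]
    rw [Lharm, Finset.sum_range_succ, ← Lharm]
    push_cast
    nlinarith [ih]

lemma Lharm_ratio (a b : ℕ) (ha : 1 ≤ a) (hab : a ≤ b) :
    (a:ℝ) * Lharm (2^b) ≤ (b:ℝ) * Lharm (2^a) := by
  have hcast : ∀ k : ℕ, Real.log ((2^k : ℕ) : ℝ) = (k:ℝ) * Real.log 2 := by
    intro k
    rw [Nat.cast_pow, Real.log_pow]
    push_cast; ring
  have h1 : Lharm (2^b) ≤ Lharm (2^a) + ((b:ℝ) - a) * Real.log 2 := by
    have h := Lharm_sub_le (2^a) Nat.one_le_two_pow (2^b) (Nat.pow_le_pow_right (by norm_num) hab)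
    rw [hcast, hcast] at h
    linarith
  have h2 : (a:ℝ) * Real.log 2 ≤ Lharm (2^a) := by
    have hl := log_le_Lharm (2^a)
    have h4 : Real.log ((2^a : ℕ) : ℝ) ≤ Real.log (((2^a : ℕ) : ℝ) + 1) := by
      apply Real.log_le_log (by positivity)
      linarith
    rw [hcast] at h4
    linarith
  have haR : (1:ℝ) ≤ (a:ℝ) := by exact_mod_cast ha
  have hba : (0:ℝ) ≤ (b:ℝ) - a := by
    have : (a:ℝ) ≤ b := by exact_mod_cast hab
    linarith
  nlinarith [h1, h2]

lemma le_apply_of_strictMono {N M : ℕ} (f : Fin N → Fin M) (hf : StrictMono f) :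
    ∀ (v : ℕ) (hv : v < N), v ≤ (f ⟨v, hv⟩ : ℕ) := by
  intro v
  induction v with
  | zero => intro _; exact Nat.zero_le _
  | succ v ih =>
    intro hv
    have hv' : v < N := Nat.lt_of_succ_lt hv
    have hlt : f ⟨v, hv'⟩ < f ⟨v+1, hv⟩ := hf (by simp [Fin.lt_def])
    have h2 := ih hv'
    rw [Fin.lt_def] at hlt
    omega

end Aux

set_option maxHeartbeats 4000000 in
/-- **Theorem 1 (van Dam–Hayden embezzlement).**
For `n ≥ m/ε` and any bipartite state `ψ = ∑ᵢ αᵢ θᵢ ⊗ θ'ᵢ` on `2m` qubits (given in Schmidt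
form), the overlap `⟨Φ(μ_n ⊗ ψ), E(ψ)⟩` with the embezzled version
`E(ψ) = (1/C_n) ∑_{r=1}^{2^n} (1/√r) (e_{j_r} ⊗ θ_{i_r}) ⊗ (e_{j_r} ⊗ θ'_{i_r})`
is real and at least `1 - ε`.  Here `σ` is a bijection rearranging the coefficients
`γ_{(j,i)} = αᵢ/(C_n √j)` in non-increasing order and `σ r = (j_r, i_r)`. -/
theorem embezzlement_overlap (n m : ℕ) (hn : 0 < n) (hm : 0 < m)
    (ε : ℝ) (hε0 : 0 < ε) (hε1 : ε < 1) (hnm : (m : ℝ) / ε ≤ (n : ℝ))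
    (θ θ' : Fin (2 ^ m) → EuclideanSpace ℂ (Fin (2 ^ m)))
    (hθ : Orthonormal ℂ θ) (hθ' : Orthonormal ℂ θ')
    (α : Fin (2 ^ m) → ℝ) (hα0 : ∀ i, 0 ≤ α i) (hα1 : ∑ i, α i ^ 2 = 1)
    (ψ : EuclideanSpace ℂ (Fin (2 ^ m) × Fin (2 ^ m)))
    (hψ : ψ = ∑ i, ((α i : ℝ) : ℂ) • tens (θ i) (θ' i))
    (γ : Fin (2 ^ n) × Fin (2 ^ m) → ℝ)
    (hγ : ∀ p, γ p = α p.2 / (Cconst n * Real.sqrt ((p.1 : ℝ) + 1)))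
    (σ : Fin (2 ^ (n + m)) ≃ Fin (2 ^ n) × Fin (2 ^ m))
    (hanti : Antitone (γ ∘ σ))
    (Eψ : EuclideanSpace ℂ ((Fin (2 ^ n) × Fin (2 ^ m)) × (Fin (2 ^ n) × Fin (2 ^ m))))
    (hEψ : Eψ = ∑ r : Fin (2 ^ n),
      ((1 / (Cconst n * Real.sqrt ((r : ℝ) + 1)) : ℝ) : ℂ) •
        tens
          (tens (EuclideanSpace.single
              (σ (Fin.castLE (Nat.pow_le_pow_right (by norm_num) (Nat.le_add_right n m)) r)).1 1)
            (θ (σ (Fin.castLE (Nat.pow_le_pow_right (by norm_num) (Nat.le_add_right n m)) r)).2))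
          (tens (EuclideanSpace.single
              (σ (Fin.castLE (Nat.pow_le_pow_right (by norm_num) (Nat.le_add_right n m)) r)).1 1)
            (θ' (σ (Fin.castLE (Nat.pow_le_pow_right (by norm_num) (Nat.le_add_right n m)) r)).2))) :
    (inner ℂ (reorder (tens (embezState n) ψ)) Eψ : ℂ).im = 0 ∧
      1 - ε ≤ (inner ℂ (reorder (tens (embezState n) ψ)) Eψ : ℂ).re := by
  classical
  -- abbreviations
  have hpow : 2^n ≤ 2^(n+m) := Nat.pow_le_pow_right (by norm_num) (Nat.le_add_right n m)
  set cst : Fin (2^n) → Fin (2^(n+m)) :=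
    Fin.castLE (Nat.pow_le_pow_right (by norm_num) (Nat.le_add_right n m)) with hcst
  set w : Fin (2^n) → ℝ := fun r => 1 / (Cconst n * Real.sqrt ((r : ℝ) + 1)) with hw
  -- positivity facts
  have hCpos : 0 < Cconst n := by
    apply Real.sqrt_pos.mpr
    apply Finset.sum_pos
    · intro j _; positivity
    · exact Finset.univ_nonempty
  have hCsq : (Cconst n)^2 = Lharm (2^n) := by
    rw [Cconst, Real.sq_sqrt]
    · rw [Lharm, ← Fin.sum_univ_eq_sum_range (fun v => 1/((v:ℝ)+1))]
    · apply Finset.sum_nonneg; intro j _; positivity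
  have hγ0 : ∀ p, 0 ≤ γ p := by
    intro p; rw [hγ]; exact div_nonneg (hα0 p.2) (by positivity)
  have hw0 : ∀ r, 0 ≤ w r := by
    intro r; simp only [hw]; positivity
  -- Part 1: the inner product is the real number ∑ r, w r * γ (σ (cst r))
  have hterm : ∀ (q : Fin (2^(n+m))) (c : ℝ),
      (inner ℂ (reorder (tens (embezState n) ψ))
        (((c : ℝ) : ℂ) • tens (tens (EuclideanSpace.single (σ q).1 1) (θ (σ q).2))
          (tens (EuclideanSpace.single (σ q).1 1) (θ' (σ q).2))) : ℂ)
      = ((c * γ (σ q) : ℝ) : ℂ) := by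
    intro q c
    rw [inner_smul_right, key1, double_sum_inner, embez_apply, if_pos rfl, hψ,
      key2 θ θ' hθ hθ' α, Complex.conj_ofReal, hγ]
    push_cast
    ring
  have hval : (inner ℂ (reorder (tens (embezState n) ψ)) Eψ : ℂ)
      = ((∑ r : Fin (2^n), w r * γ (σ (cst r)) : ℝ) : ℂ) := by
    rw [hEψ, inner_sum]
    rw [Finset.sum_congr rfl (fun r _ => hterm (cst r) (w r))]
    push_cast
    rfl
  -- Part 2 : the lower bound
  have hmn : m < n := by
    have h1 : (m:ℝ) < (n:ℝ) := by
      have h2 : (0:ℝ) < m := by exact_mod_cast hm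
      have h3 : (m:ℝ) < (m:ℝ)/ε := by
        rw [lt_div_iff₀ hε0]
        nlinarith
      linarith
    exact_mod_cast h1
  set a : ℕ := n - m with ha_def
  have ha : 1 ≤ a := by omega
  have ham : a + m = n := by omega
  have han : a ≤ n := by omega
  have hpa : 2^a ≤ 2^n := Nat.pow_le_pow_right (by norm_num) han
  -- the subset T of pairs with first index < 2^a
  set sA : Finset (Fin (2^n)) := Finset.map (Fin.castLEOrderEmb hpa).toEmbedding Finset.univ with hsA
  have hscard : sA.card = 2^a := by
    rw [hsA, Finset.card_map, Finset.card_univ, Fintype.card_fin]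
  set T : Finset (Fin (2^n) × Fin (2^m)) := sA ×ˢ (Finset.univ : Finset (Fin (2^m))) with hT
  have hTcard : T.card = 2^n := by
    rw [hT, Finset.card_product, hscard, Finset.card_univ, Fintype.card_fin,
      ← pow_add, ham]
  -- the increasing enumeration of σ⁻¹(T)
  set A : Finset (Fin (2^(n+m))) := T.image σ.symm with hA
  have hAcard : A.card = 2^n := by
    rw [hA, Finset.card_image_of_injective _ σ.symm.injective, hTcard]
  set e : Fin (2^n) ↪o Fin (2^(n+m)) := A.orderEmbOfFin hAcard with he
  have he_mem : ∀ k, σ (e k) ∈ T := by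
    intro k
    have h1 : e k ∈ A := Finset.orderEmbOfFin_mem A hAcard k
    rw [hA, Finset.mem_image] at h1
    obtain ⟨q, hq, hq2⟩ := h1
    rw [← hq2, Equiv.apply_symm_apply]
    exact hq
  have he_le : ∀ k : Fin (2^n), (k : ℕ) ≤ (e k : ℕ) := by
    intro k
    have := le_apply_of_strictMono e e.strictMono k.1 k.2
    simpa using this
  -- the counting bound
  have count : ∀ p : Fin (2^n) × Fin (2^m),
      ((Finset.univ.filter fun q : Fin (2^n) × Fin (2^m) => γ p ≤ γ q).card : ℝ) * (α p.2)^2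
        ≤ (p.1 : ℝ) + 1 := by
    intro p
    rcases eq_or_lt_of_le (hα0 p.2) with hz | hpos
    · rw [← hz]
      have : (0:ℝ) ≤ (p.1 : ℝ) + 1 := by positivity
      simpa using this
    · have hc2 : (0:ℝ) < (α p.2)^2 := by positivity
      have hcardsplit : (Finset.univ.filter fun q : Fin (2^n) × Fin (2^m) => γ p ≤ γ q).card
          = ∑ i' : Fin (2^m),
            (Finset.univ.filter fun j' : Fin (2^n) => γ p ≤ γ (j', i')).card := by
        rw [Finset.card_filter, Fintype.sum_prod_type, Finset.sum_comm]
        apply Finset.sum_congr rfl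
        intro i' _
        rw [Finset.card_filter]
      rw [hcardsplit]
      push_cast
      rw [Finset.sum_mul]
      have hbound : ∀ i' : Fin (2^m),
          ((Finset.univ.filter fun j' : Fin (2^n) => γ p ≤ γ (j', i')).card : ℝ) * (α p.2)^2
            ≤ ((p.1 : ℝ) + 1) * (α i')^2 := by
        intro i'
        set B : ℝ := ((p.1 : ℝ) + 1) * (α i')^2 / (α p.2)^2 with hB
        have hB0 : 0 ≤ B := by positivity
        have hmem : ∀ j' : Fin (2^n), γ p ≤ γ (j', i') → ((j' : ℝ) + 1) ≤ B := by
          intro j' hj'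
          rw [hγ, hγ] at hj'
          simp only at hj'
          have s1 : (0:ℝ) < Real.sqrt ((p.1 : ℝ) + 1) := Real.sqrt_pos.mpr (by positivity)
          have s2 : (0:ℝ) < Real.sqrt ((j' : ℝ) + 1) := Real.sqrt_pos.mpr (by positivity)
          rw [div_le_div_iff₀ (by positivity) (by positivity)] at hj'
          have h5 : α p.2 * Real.sqrt ((j' : ℝ) + 1) ≤ α i' * Real.sqrt ((p.1 : ℝ) + 1) := by
            nlinarith
          have h6 : (α p.2)^2 * ((j' : ℝ) + 1) ≤ (α i')^2 * ((p.1 : ℝ) + 1) := by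
            have h7 := mul_self_le_mul_self (by positivity) h5
            have e1 : Real.sqrt ((j' : ℝ) + 1) * Real.sqrt ((j' : ℝ) + 1) = (j' : ℝ) + 1 :=
              Real.mul_self_sqrt (by positivity)
            have e2 : Real.sqrt ((p.1 : ℝ) + 1) * Real.sqrt ((p.1 : ℝ) + 1) = (p.1 : ℝ) + 1 :=
              Real.mul_self_sqrt (by positivity)
            nlinarith
          rw [hB, le_div_iff₀ hc2]
          nlinarith
        have hcardle : (Finset.univ.filter fun j' : Fin (2^n) => γ p ≤ γ (j', i')).card
            ≤ ⌊B⌋₊ := by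
          rw [← Finset.card_range ⌊B⌋₊]
          refine Finset.card_le_card_of_injOn (fun j' => (j' : ℕ)) ?_ ?_
          · intro j' hj'
            simp only [Finset.mem_coe, Finset.mem_filter, Finset.mem_univ, true_and] at hj'
            rw [Finset.mem_coe, Finset.mem_range]
            have h8 := hmem j' hj'
            have h9 : ((j' : ℕ) + 1 : ℕ) ≤ ⌊B⌋₊ := by
              apply Nat.le_floor
              push_cast
              exact h8
            exact Nat.lt_of_succ_le h9
          · intro x _ y _ hxy
            exact Fin.ext hxy
        calc ((Finset.univ.filter fun j' : Fin (2^n) => γ p ≤ γ (j', i')).card : ℝ) * (α p.2)^2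
            ≤ (⌊B⌋₊ : ℝ) * (α p.2)^2 := by
              apply mul_le_mul_of_nonneg_right _ (le_of_lt hc2)
              exact_mod_cast hcardle
          _ ≤ B * (α p.2)^2 := mul_le_mul_of_nonneg_right (Nat.floor_le hB0) (le_of_lt hc2)
          _ = ((p.1 : ℝ) + 1) * (α i')^2 := by
              rw [hB]; field_simp
      calc ∑ i' : Fin (2^m),
            ((Finset.univ.filter fun j' : Fin (2^n) => γ p ≤ γ (j', i')).card : ℝ) * (α p.2)^2
          ≤ ∑ i' : Fin (2^m), ((p.1 : ℝ) + 1) * (α i')^2 :=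
            Finset.sum_le_sum (fun i' _ => hbound i')
        _ = (p.1 : ℝ) + 1 := by rw [← Finset.mul_sum, hα1, mul_one]
  -- pointwise bound : w k * γ (σ (cst k)) ≥ γ (σ (e k))^2
  have hpoint : ∀ k : Fin (2^n), γ (σ (e k))^2 ≤ w k * γ (σ (cst k)) := by
    intro k
    set p := σ (e k) with hp
    -- γ p ≤ γ (σ (cst k))
    have h1 : γ p ≤ γ (σ (cst k)) := by
      have hle : cst k ≤ e k := by
        rw [Fin.le_def]
        exact he_le k
      exact hanti hle
    -- γ p ≤ w k
    have h2 : γ p ≤ w k := by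
      have hcardlb : (k : ℕ) + 1
          ≤ (Finset.univ.filter fun q : Fin (2^n) × Fin (2^m) => γ p ≤ γ q).card := by
        have hsub : (Finset.Iic (e k)).card
            ≤ (Finset.univ.filter fun q : Fin (2^n) × Fin (2^m) => γ p ≤ γ q).card := by
          apply Finset.card_le_card_of_injOn σ
          · intro s hs
            simp only [Finset.mem_coe, Finset.mem_Iic] at hs
            simp only [Finset.mem_coe, Finset.mem_filter, Finset.mem_univ, true_and]
            exact hanti hs
          · intro x _ y _ hxy
            exact σ.injective hxy
        rw [Fin.card_Iic] at hsub
        have := he_le k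
        omega
      have hk2 : ((k : ℝ) + 1) * (α p.2)^2 ≤ (p.1 : ℝ) + 1 := by
        calc ((k : ℝ) + 1) * (α p.2)^2
            ≤ ((Finset.univ.filter fun q : Fin (2^n) × Fin (2^m) => γ p ≤ γ q).card : ℝ)
              * (α p.2)^2 := by
              apply mul_le_mul_of_nonneg_right _ (by positivity)
              exact_mod_cast hcardlb
          _ ≤ (p.1 : ℝ) + 1 := count p
      -- conclude
      have s1 : (0:ℝ) < Real.sqrt ((p.1 : ℝ) + 1) := Real.sqrt_pos.mpr (by positivity)
      have s2 : (0:ℝ) < Real.sqrt ((k : ℝ) + 1) := Real.sqrt_pos.mpr (by positivity)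
      have h3 : α p.2 * Real.sqrt ((k : ℝ) + 1) ≤ Real.sqrt ((p.1 : ℝ) + 1) := by
        have h4 : Real.sqrt (((k : ℝ) + 1) * (α p.2)^2) ≤ Real.sqrt ((p.1 : ℝ) + 1) :=
          Real.sqrt_le_sqrt hk2
        rw [Real.sqrt_mul (by positivity), Real.sqrt_sq (hα0 p.2)] at h4
        calc α p.2 * Real.sqrt ((k : ℝ) + 1)
            = Real.sqrt ((k : ℝ) + 1) * α p.2 := by ring
          _ ≤ Real.sqrt ((p.1 : ℝ) + 1) := h4
      show γ p ≤ 1 / (Cconst n * Real.sqrt ((k : ℝ) + 1))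
      rw [hγ]
      rw [div_le_div_iff₀ (by positivity) (by positivity)]
      have h5 := mul_le_mul_of_nonneg_left h3 hCpos.le
      nlinarith [h5]
    have h0 : 0 ≤ γ p := hγ0 p
    calc γ p ^ 2 = γ p * γ p := sq (γ p)
      _ ≤ w k * γ (σ (cst k)) := mul_le_mul h2 h1 h0 (hw0 k)
  -- sum of γ² over T
  have hsum_e : ∑ k : Fin (2^n), γ (σ (e k))^2 = ∑ p ∈ T, γ p ^2 := by
    have h1 : ∑ k : Fin (2^n), γ (σ (e k))^2 = ∑ x ∈ A, γ (σ x)^2 := by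
      apply Finset.sum_bij (fun k _ => e k)
      · intro k _
        exact Finset.orderEmbOfFin_mem A hAcard k
      · intro x _ y _ hxy
        exact e.injective hxy
      · intro x hx
        have h2 : x ∈ Set.range e := by
          rw [he, Finset.range_orderEmbOfFin]
          exact hx
        obtain ⟨k, hk⟩ := h2
        exact ⟨k, Finset.mem_univ k, hk⟩
      · intro k _
        rfl
    rw [h1, hA, Finset.sum_image]
    · apply Finset.sum_congr rfl
      intro p _
      rw [Equiv.apply_symm_apply]
    · intro x _ y _ hxy
      exact σ.symm.injective hxy
  have hsum_T : ∑ p ∈ T, γ p ^2 = Lharm (2^a) / Lharm (2^n) := by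
    rw [hT, Finset.sum_product]
    have h1 : ∀ j ∈ sA,
        ∑ i : Fin (2^m), γ (j, i)^2 = 1/((j:ℝ)+1) / Lharm (2^n) := by
      intro j _
      have h2 : ∀ i : Fin (2^m), γ (j, i)^2 = α i^2 * (1/((j:ℝ)+1) / Lharm (2^n)) := by
        intro i
        rw [hγ]
        simp only
        rw [div_pow, mul_pow, Real.sq_sqrt (by positivity), hCsq]
        field_simp
      rw [Finset.sum_congr rfl (fun i _ => h2 i), ← Finset.sum_mul, hα1, one_mul]
    rw [Finset.sum_congr rfl h1]
    rw [← Finset.sum_div]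
    have hnum : ∑ j ∈ sA, 1/((j:ℝ)+1) = Lharm (2^a) := by
      rw [hsA, Finset.sum_map, Lharm, ← Fin.sum_univ_eq_sum_range (fun v => 1/((v:ℝ)+1))]
      apply Finset.sum_congr rfl
      intro v _
      simp [Fin.coe_castLE]
      rfl
    rw [hnum]
  -- final arithmetic
  have hLn_pos : 0 < Lharm (2^n) := by
    rw [← hCsq]; positivity
  have hLa_pos : 0 < Lharm (2^a) := by
    rw [Lharm]
    apply Finset.sum_pos
    · intro j _; positivity
    · exact Finset.nonempty_range_iff.mpr (by positivity)
  have hfrac : (a:ℝ)/(n:ℝ) ≤ Lharm (2^a) / Lharm (2^n) := by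
    rw [div_le_div_iff₀ (by exact_mod_cast hn) hLn_pos]
    have := Lharm_ratio a n ha han
    linarith
  have hεn : 1 - ε ≤ (a:ℝ)/(n:ℝ) := by
    have hn0 : (0:ℝ) < n := by exact_mod_cast hn
    have hma : (a:ℝ) = (n:ℝ) - (m:ℝ) := by
      rw [ha_def]
      push_cast [Nat.cast_sub (le_of_lt hmn)]
      ring
    have hmε : (m:ℝ) ≤ ε * n := by
      rw [div_le_iff₀ hε0] at hnm
      linarith
    rw [hma, le_div_iff₀ hn0]
    nlinarith
  have hfinal : 1 - ε ≤ ∑ r : Fin (2^n), w r * γ (σ (cst r)) := by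
    calc 1 - ε ≤ (a:ℝ)/(n:ℝ) := hεn
      _ ≤ Lharm (2^a) / Lharm (2^n) := hfrac
      _ = ∑ p ∈ T, γ p ^2 := hsum_T.symm
      _ = ∑ k : Fin (2^n), γ (σ (e k))^2 := hsum_e.symm
      _ ≤ ∑ r : Fin (2^n), w r * γ (σ (cst r)) := Finset.sum_le_sum (fun k _ => hpoint k)
  rw [hval]
  constructor
  · simp
  · simpa using hfinal
end

section
/- For all positive integers n and m, n · ∑_{j=1}^{2^{n+m}} 1/j ≤ (n + m) · ∑_{j=1}^{2^n} 1/j; equivalently, the ratio (∑_{j=1}^{2^n} 1/j) / (∑_{j=1}^{2^{n+m}} 1/j) is at least n/(n+m). -/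
open Finset Real

private lemma term_le_log (j : ℕ) (hj : 1 ≤ j) :
    1 / ((j : ℝ) + 1) ≤ Real.log ((j : ℝ) + 1) - Real.log j := by
  have hj0 : (0 : ℝ) < j := by exact_mod_cast hj
  have hpos : (0 : ℝ) < (j : ℝ) / ((j : ℝ) + 1) := by positivity
  have h := Real.log_le_sub_one_of_pos hpos
  rw [Real.log_div (ne_of_gt hj0) (by positivity)] at h
  have : (j : ℝ) / ((j : ℝ) + 1) - 1 = -(1 / ((j : ℝ) + 1)) := by
    field_simp
    ring
  rw [this] at h
  linarith

private lemma tail_le (a b : ℕ) (ha : 1 ≤ a) (hab : a ≤ b) :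
    ∑ j ∈ Finset.Ico a b, 1 / ((j : ℝ) + 1) ≤ Real.log b - Real.log a := by
  have h1 : ∑ j ∈ Finset.Ico a b, 1 / ((j : ℝ) + 1) ≤
      ∑ j ∈ Finset.Ico a b, (Real.log ((j : ℝ) + 1) - Real.log j) := by
    apply Finset.sum_le_sum
    intro j hj
    exact term_le_log j (le_trans ha (Finset.mem_Ico.mp hj).1)
  have h2 : ∑ j ∈ Finset.Ico a b, (Real.log ((j : ℝ) + 1) - Real.log j)
      = Real.log b - Real.log a := by
    have e : ∀ j ∈ Finset.Ico a b, Real.log ((j : ℝ) + 1) - Real.log j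
        = (fun k : ℕ => Real.log (k : ℝ)) (j + 1) - (fun k : ℕ => Real.log (k : ℝ)) j := by
      intro j _; simp [Nat.cast_add]
    rw [Finset.sum_congr rfl e, Finset.sum_Ico_eq_sub _ hab,
        Finset.sum_range_sub (fun k : ℕ => Real.log (k : ℝ)),
        Finset.sum_range_sub (fun k : ℕ => Real.log (k : ℝ))]
    ring
  linarith

private lemma log_le_H (N : ℕ) :
    Real.log ((N : ℝ) + 1) ≤ ∑ j ∈ Finset.range N, 1 / ((j : ℝ) + 1) := by
  have h := log_add_one_le_harmonic N
  have he : ((harmonic N : ℚ) : ℝ) = ∑ j ∈ Finset.range N, 1 / ((j : ℝ) + 1) := by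
    rw [harmonic]
    push_cast
    simp [one_div]
  rw [he] at h
  exact le_trans (le_of_eq (by push_cast; ring_nf)) h

/-- **Harmonic number ratio bound at powers of two.**
`n · H_{2^(n+m)} ≤ (n+m) · H_{2^n}`, where `H_N = ∑_{j=1}^N 1/j`. -/
theorem harmonic_pow_two_ratio (n m : ℕ) (hn : 0 < n) (hm : 0 < m) :
    (n : ℝ) * ∑ j ∈ Finset.range (2 ^ (n + m)), 1 / ((j : ℝ) + 1) ≤
      ((n : ℝ) + (m : ℝ)) * ∑ j ∈ Finset.range (2 ^ n), 1 / ((j : ℝ) + 1) := by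
  set Hn : ℝ := ∑ j ∈ Finset.range (2 ^ n), 1 / ((j : ℝ) + 1) with hHn
  have hle : 2 ^ n ≤ 2 ^ (n + m) := Nat.pow_le_pow_right (by norm_num) (Nat.le_add_right n m)
  have hsplit : ∑ j ∈ Finset.range (2 ^ (n + m)), 1 / ((j : ℝ) + 1)
      = Hn + ∑ j ∈ Finset.Ico ((2 : ℕ) ^ n) ((2 : ℕ) ^ (n + m)), 1 / ((j : ℝ) + 1) := by
    rw [hHn, ← Finset.sum_range_add_sum_Ico _ hle]
  have htail : ∑ j ∈ Finset.Ico ((2 : ℕ) ^ n) ((2 : ℕ) ^ (n + m)), 1 / ((j : ℝ) + 1)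
      ≤ (m : ℝ) * Real.log 2 := by
    have := tail_le (2 ^ n) (2 ^ (n + m)) (Nat.one_le_two_pow) hle
    have hl : Real.log ((2 : ℕ) ^ (n + m) : ℕ) - Real.log ((2 : ℕ) ^ n : ℕ)
        = (m : ℝ) * Real.log 2 := by
      push_cast
      rw [Real.log_pow, Real.log_pow]
      push_cast
      ring
    linarith [this, le_of_eq hl]
  have hHnlb : (n : ℝ) * Real.log 2 ≤ Hn := by
    have h1 : Real.log ((2 : ℝ) ^ n) ≤ Real.log (((2 : ℕ) ^ n : ℕ) + 1) := by
      apply Real.log_le_log (by positivity)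
      push_cast; linarith
    have h2 := log_le_H (2 ^ n)
    rw [Real.log_pow] at h1
    push_cast at h1 h2 ⊢
    linarith
  have hnm : (0 : ℝ) ≤ (n : ℝ) := Nat.cast_nonneg n
  have hmpos : (0 : ℝ) ≤ (m : ℝ) := Nat.cast_nonneg m
  rw [hsplit]
  have : (n : ℝ) * ((m : ℝ) * Real.log 2) ≤ (m : ℝ) * Hn := by
    calc (n : ℝ) * ((m : ℝ) * Real.log 2) = (m : ℝ) * ((n : ℝ) * Real.log 2) := by ring
    _ ≤ (m : ℝ) * Hn := by
        apply mul_le_mul_of_nonneg_left hHnlb hmpos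
  have ht : (n : ℝ) * (∑ j ∈ Finset.Ico ((2 : ℕ) ^ n) ((2 : ℕ) ^ (n + m)), 1 / ((j : ℝ) + 1))
      ≤ (n : ℝ) * ((m : ℝ) * Real.log 2) := mul_le_mul_of_nonneg_left htail hnm
  nlinarith [ht, this]
end
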